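/- There are exactly four linear orders θ on ℤ satisfying θ = θ+2, the reflection condition (a ≺_θ b iff -b-1 ≺_θ -a-1), and such that some two integers of the same parity are consecutive in θ. They are: (i) all odd numbers in increasing order followed by all even numbers in increasing order; (ii) all odds decreasing followed by all evens decreasing; (iii) all evens increasing followed by all odds increasing; (iv) all evens decreasing followed by all odds decreasing. (Here 'X followed by Y' means every element of X is θ-smaller than every element of Y.) -/

import Mathlib

/-- odds increasing, then evens increasing -/
def tauOE (a b : ℤ) : Prop :=
  (a % 2 = 1 ∧ b % 2 = 1 ∧ a < b) ∨ (a % 2 = 0 ∧ b % 2 = 0 ∧ a < b) ∨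
  (a % 2 = 1 ∧ b % 2 = 0)

/-- odds decreasing, then evens decreasing -/
def tauOEm (a b : ℤ) : Prop :=
  (a % 2 = 1 ∧ b % 2 = 1 ∧ b < a) ∨ (a % 2 = 0 ∧ b % 2 = 0 ∧ b < a) ∨
  (a % 2 = 1 ∧ b % 2 = 0)

/-- evens increasing, then odds increasing -/
def tauEO (a b : ℤ) : Prop :=
  (a % 2 = 0 ∧ b % 2 = 0 ∧ a < b) ∨ (a % 2 = 1 ∧ b % 2 = 1 ∧ a < b) ∨
  (a % 2 = 0 ∧ b % 2 = 1)

/-- evens decreasing, then odds decreasing -/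
def tauEOm (a b : ℤ) : Prop :=
  (a % 2 = 0 ∧ b % 2 = 0 ∧ b < a) ∨ (a % 2 = 1 ∧ b % 2 = 1 ∧ b < a) ∨
  (a % 2 = 0 ∧ b % 2 = 1)

/-- `a` and `b` are distinct and consecutive in the order `r`:
no integer lies strictly `r`-between them. -/
def Consecutive (r : ℤ → ℤ → Prop) (a b : ℤ) : Prop :=
  a ≠ b ∧ ∀ c : ℤ, ¬(r a c ∧ r c b) ∧ ¬(r b c ∧ r c a)

/- ### Auxiliary lemmas -/

lemma shiftk (r : ℤ → ℤ → Prop) (hS : ∀ a b : ℤ, r a b ↔ r (a + 2) (b + 2)) :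
    ∀ (k : ℤ) (a b : ℤ), r a b ↔ r (a + 2 * k) (b + 2 * k) := by
  intro k
  induction k using Int.induction_on with
  | zero => intro a b; norm_num
  | succ n ih =>
      intro a b
      rw [show a + 2 * ((n : ℤ) + 1) = a + 2 * n + 2 by ring,
          show b + 2 * ((n : ℤ) + 1) = b + 2 * n + 2 by ring, ← hS]
      exact ih a b
  | pred n ih =>
      intro a b
      rw [ih a b]
      have h := hS (a + 2 * (-(n : ℤ) - 1)) (b + 2 * (-(n : ℤ) - 1))
      rw [show a + 2 * (-(n : ℤ) - 1) + 2 = a + 2 * (-(n : ℤ)) by ring,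
          show b + 2 * (-(n : ℤ) - 1) + 2 = b + 2 * (-(n : ℤ)) by ring] at h
      exact h.symm

lemma eq_tauOE (r : ℤ → ℤ → Prop)
    (hir : ∀ x : ℤ, ¬ r x x)
    (has : ∀ {x y : ℤ}, r x y → ¬ r y x)
    (mono : ∀ x y : ℤ, x % 2 = y % 2 → x < y → r x y)
    (hcross : ∀ x y : ℤ, x % 2 = 1 → y % 2 = 0 → r x y) :
    r = tauOE := by
  funext x y
  apply propext
  unfold tauOE
  constructor
  · intro hxy
    rcases Int.emod_two_eq x with hx | hx <;> rcases Int.emod_two_eq y with hy | hy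
    · refine Or.inr (Or.inl ⟨hx, hy, ?_⟩)
      rcases lt_trichotomy x y with h | h | h
      · exact h
      · exact absurd hxy (by rw [h]; exact hir y)
      · exact absurd hxy (has (mono y x (by omega) h))
    · exact absurd hxy (has (hcross y x hy hx))
    · exact Or.inr (Or.inr ⟨hx, hy⟩)
    · refine Or.inl ⟨hx, hy, ?_⟩
      rcases lt_trichotomy x y with h | h | h
      · exact h
      · exact absurd hxy (by rw [h]; exact hir y)
      · exact absurd hxy (has (mono y x (by omega) h))
  · rintro (⟨hx, hy, h⟩ | ⟨hx, hy, h⟩ | ⟨hx, hy⟩)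
    · exact mono x y (by omega) h
    · exact mono x y (by omega) h
    · exact hcross x y hx hy

lemma eq_tauEO (r : ℤ → ℤ → Prop)
    (hir : ∀ x : ℤ, ¬ r x x)
    (has : ∀ {x y : ℤ}, r x y → ¬ r y x)
    (mono : ∀ x y : ℤ, x % 2 = y % 2 → x < y → r x y)
    (hcross : ∀ x y : ℤ, x % 2 = 0 → y % 2 = 1 → r x y) :
    r = tauEO := by
  funext x y
  apply propext
  unfold tauEO
  constructor
  · intro hxy
    rcases Int.emod_two_eq x with hx | hx <;> rcases Int.emod_two_eq y with hy | hy
    · refine Or.inl ⟨hx, hy, ?_⟩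
      rcases lt_trichotomy x y with h | h | h
      · exact h
      · exact absurd hxy (by rw [h]; exact hir y)
      · exact absurd hxy (has (mono y x (by omega) h))
    · exact Or.inr (Or.inr ⟨hx, hy⟩)
    · exact absurd hxy (has (hcross y x hy hx))
    · refine Or.inr (Or.inl ⟨hx, hy, ?_⟩)
      rcases lt_trichotomy x y with h | h | h
      · exact h
      · exact absurd hxy (by rw [h]; exact hir y)
      · exact absurd hxy (has (mono y x (by omega) h))
  · rintro (⟨hx, hy, h⟩ | ⟨hx, hy, h⟩ | ⟨hx, hy⟩)
    · exact mono x y (by omega) h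
    · exact mono x y (by omega) h
    · exact hcross x y hx hy

lemma key (r : ℤ → ℤ → Prop) (hSTO : IsStrictTotalOrder ℤ r)
    (hS : ∀ a b : ℤ, r a b ↔ r (a + 2) (b + 2))
    (hR : ∀ a b : ℤ, r a b ↔ r (-b - 1) (-a - 1))
    (hC : ∃ a b : ℤ, a % 2 = b % 2 ∧ Consecutive r a b)
    (h02 : r 0 2) : r = tauOE ∨ r = tauEO := by
  have htr : ∀ {x y z : ℤ}, r x y → r y z → r x z :=
    fun h1 h2 => hSTO.trans _ _ _ h1 h2
  have hir : ∀ x : ℤ, ¬ r x x := fun x => hSTO.irrefl x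
  have has : ∀ {x y : ℤ}, r x y → ¬ r y x := fun h1 h2 => hir _ (htr h1 h2)
  have htri : ∀ x y : ℤ, x ≠ y → r x y ∨ r y x := by
    intro x y hne
    rcases @trichotomous _ _ hSTO.toTrichotomous x y with h | h | h
    · exact Or.inl h
    · exact absurd h hne
    · exact Or.inr h
  -- odds are also increasing, via reflection
  have h13 : r 1 3 := by
    have h1 : r (-3) (-1) := by
      have := (hR 0 2).mp h02
      norm_num at this ⊢
      exact this
    have h2 := (shiftk r hS 2 (-3) (-1)).mp h1
    norm_num at h2
    exact h2
  have hstep : ∀ x : ℤ, r x (x + 2) := by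
    intro x
    rcases Int.emod_two_eq x with hx | hx
    · have h := (shiftk r hS (x / 2) 0 2).mp h02
      rw [show (0 : ℤ) + 2 * (x / 2) = x by omega,
          show (2 : ℤ) + 2 * (x / 2) = x + 2 by omega] at h
      exact h
    · have h := (shiftk r hS ((x - 1) / 2) 1 3).mp h13
      rw [show (1 : ℤ) + 2 * ((x - 1) / 2) = x by omega,
          show (3 : ℤ) + 2 * ((x - 1) / 2) = x + 2 by omega] at h
      exact h
  have hchain : ∀ (n : ℕ) (x : ℤ), r x (x + 2 * n + 2) := by
    intro n
    induction n with
    | zero => intro x; simpa using hstep x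
    | succ m ih =>
        intro x
        have h3 := htr (ih x) (hstep (x + 2 * m + 2))
        have he : x + 2 * (m : ℤ) + 2 + 2 = x + 2 * ((m + 1 : ℕ) : ℤ) + 2 := by
          push_cast; ring
        rw [he] at h3
        exact h3
  have mono : ∀ x y : ℤ, x % 2 = y % 2 → x < y → r x y := by
    intro x y hp hlt
    have h := hchain ((y - x) / 2 - 1).toNat x
    rw [show x + 2 * ((((y - x) / 2 - 1).toNat : ℤ)) + 2 = y by omega] at h
    exact h
  -- WLOG the consecutive pair satisfies r a b
  suffices main : ∀ a b : ℤ, a % 2 = b % 2 → Consecutive r a b → r a b →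
      (r = tauOE ∨ r = tauEO) by
    obtain ⟨a, b, hpar, hcons⟩ := hC
    rcases htri a b hcons.1 with hab | hba
    · exact main a b hpar hcons hab
    · exact main b a hpar.symm ⟨hcons.1.symm, fun c => ⟨(hcons.2 c).2, (hcons.2 c).1⟩⟩ hba
  intro a b hpar hcons hab
  have hlt : a < b := by
    rcases lt_trichotomy a b with h | h | h
    · exact h
    · exact absurd hab (by rw [h]; exact hir b)
    · exact absurd hab (has (mono b a hpar.symm h))
  have hb : b = a + 2 := by
    by_contra hne
    exact (hcons.2 (a + 2)).1 ⟨hstep a, mono (a + 2) b (by omega) (by omega)⟩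
  subst hb
  have haa2 : r a (a + 2) := hstep a
  have hdi : ∀ c : ℤ, c % 2 ≠ a % 2 → r c a ∨ r (a + 2) c := by
    intro c hc
    rcases htri c a (by omega) with h | h
    · exact Or.inl h
    · right
      rcases htri c (a + 2) (by omega) with h2 | h2
      · exact absurd ⟨h, h2⟩ (hcons.2 c).1
      · exact h2
  have L1 : ∀ c : ℤ, c % 2 ≠ a % 2 → r c a → r (c + 2) a := by
    intro c hc hca
    rcases hdi (c + 2) (by omega) with h | h
    · exact h
    · exact absurd hca (has ((hS a c).mpr h))
  have L2 : ∀ c : ℤ, r c a → r (c - 2) a := by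
    intro c hca
    have h1 : r c (a + 2) := htr hca haa2
    have h2 := (hS (c - 2) a).mpr
    rw [show c - 2 + 2 = c by ring] at h2
    exact h2 h1
  have L3 : ∀ c : ℤ, r (a + 2) c → r (a + 2) (c + 2) := by
    intro c h
    exact (hS a c).mp (htr haa2 h)
  have L4 : ∀ c : ℤ, c % 2 ≠ a % 2 → r (a + 2) c → r (a + 2) (c - 2) := by
    intro c hc h
    rcases hdi (c - 2) (by omega) with h' | h'
    · exfalso
      have h2 := (hS (c - 2) a).mp h'
      rw [show c - 2 + 2 = c by ring] at h2
      exact hir c (htr h2 h)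
    · exact h'
  have hPall : ∀ c : ℤ, c % 2 ≠ a % 2 → r c a →
      ∀ c' : ℤ, c' % 2 ≠ a % 2 → r c' a := by
    intro c hc hca c' hc'
    have hall : ∀ k : ℤ, r (c + 2 * k) a := by
      intro k
      induction k using Int.induction_on with
      | zero => simpa using hca
      | succ n ih =>
          have h := L1 (c + 2 * n) (by omega) ih
          rw [show c + 2 * (n : ℤ) + 2 = c + 2 * ((n : ℤ) + 1) by ring] at h
          exact h
      | pred n ih =>
          have h := L2 (c + 2 * (-(n : ℤ))) ih
          rw [show c + 2 * (-(n : ℤ)) - 2 = c + 2 * (-(n : ℤ) - 1) by ring] at h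
          exact h
    have h := hall ((c' - c) / 2)
    rw [show c + 2 * ((c' - c) / 2) = c' by omega] at h
    exact h
  have hQall : ∀ c : ℤ, c % 2 ≠ a % 2 → r (a + 2) c →
      ∀ c' : ℤ, c' % 2 ≠ a % 2 → r (a + 2) c' := by
    intro c hc hca c' hc'
    have hall : ∀ k : ℤ, r (a + 2) (c + 2 * k) := by
      intro k
      induction k using Int.induction_on with
      | zero => simpa using hca
      | succ n ih =>
          have h := L3 (c + 2 * n) ih
          rw [show c + 2 * (n : ℤ) + 2 = c + 2 * ((n : ℤ) + 1) by ring] at h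
          exact h
      | pred n ih =>
          have h := L4 (c + 2 * (-(n : ℤ))) (by omega) ih
          rw [show c + 2 * (-(n : ℤ)) - 2 = c + 2 * (-(n : ℤ) - 1) by ring] at h
          exact h
    have h := hall ((c' - c) / 2)
    rw [show c + 2 * ((c' - c) / 2) = c' by omega] at h
    exact h
  rcases hdi (a + 1) (by omega) with hA | hB
  · -- every element of the opposite parity class is below every element of a's class
    have hcross : ∀ x y : ℤ, x % 2 ≠ a % 2 → y % 2 = a % 2 → r x y := by
      intro x y hx hy
      have h1 : r (x - 2 * ((y - a) / 2)) a :=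
        hPall (a + 1) (by omega) hA _ (by omega)
      have h2 := (shiftk r hS ((y - a) / 2) _ _).mp h1
      rw [show x - 2 * ((y - a) / 2) + 2 * ((y - a) / 2) = x by ring,
          show a + 2 * ((y - a) / 2) = y by omega] at h2
      exact h2
    rcases Int.emod_two_eq a with ha | ha
    · exact Or.inl (eq_tauOE r hir (fun h1 h2 => has h1 h2) mono
        (fun x y hx hy => hcross x y (by omega) (by omega)))
    · exact Or.inr (eq_tauEO r hir (fun h1 h2 => has h1 h2) mono
        (fun x y hx hy => hcross x y (by omega) (by omega)))
  · -- every element of a's class is below every element of the opposite class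
    have hcross : ∀ x y : ℤ, x % 2 = a % 2 → y % 2 ≠ a % 2 → r x y := by
      intro x y hx hy
      have h1 : r (a + 2) (y - 2 * ((x - (a + 2)) / 2)) :=
        hQall (a + 1) (by omega) hB _ (by omega)
      have h2 := (shiftk r hS ((x - (a + 2)) / 2) _ _).mp h1
      rw [show a + 2 + 2 * ((x - (a + 2)) / 2) = x by omega,
          show y - 2 * ((x - (a + 2)) / 2) + 2 * ((x - (a + 2)) / 2) = y by ring] at h2
      exact h2
    rcases Int.emod_two_eq a with ha | ha
    · exact Or.inr (eq_tauEO r hir (fun h1 h2 => has h1 h2) mono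
        (fun x y hx hy => hcross x y (by omega) (by omega)))
    · exact Or.inl (eq_tauOE r hir (fun h1 h2 => has h1 h2) mono
        (fun x y hx hy => hcross x y (by omega) (by omega)))

theorem stmt_4 :
    {r : ℤ → ℤ → Prop | IsStrictTotalOrder ℤ r ∧
      (∀ a b : ℤ, r a b ↔ r (a + 2) (b + 2)) ∧
      (∀ a b : ℤ, r a b ↔ r (-b - 1) (-a - 1)) ∧
      ∃ a b : ℤ, a % 2 = b % 2 ∧ Consecutive r a b}
      = {tauOE, tauOEm, tauEO, tauEOm} ∧
    ([tauOE, tauOEm, tauEO, tauEOm] : List (ℤ → ℤ → Prop)).Pairwise (· ≠ ·) := by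
  constructor
  · ext r
    simp only [Set.mem_setOf_eq, Set.mem_insert_iff, Set.mem_singleton_iff]
    constructor
    · rintro ⟨hSTO, hS, hR, hC⟩
      have h02 : r 0 2 ∨ r 2 0 := by
        rcases @trichotomous _ _ hSTO.toTrichotomous 0 2 with h | h | h
        · exact Or.inl h
        · norm_num at h
        · exact Or.inr h
      rcases h02 with h02 | h20
      · rcases key r hSTO hS hR hC h02 with h | h
        · exact Or.inl h
        · exact Or.inr (Or.inr (Or.inl h))
      · -- apply `key` to the reversed order
        have hSTO' : IsStrictTotalOrder ℤ (fun x y => r y x) :=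
          { trichotomous := by
              intro x y h1 h2
              rcases @trichotomous _ _ hSTO.toTrichotomous y x with h | h | h
              · exact absurd h h1
              · exact h.symm
              · exact absurd h h2,
            irrefl := fun x => hSTO.irrefl x,
            trans := fun x y z h1 h2 => hSTO.trans _ _ _ h2 h1 }
        have hS' : ∀ a b : ℤ, (fun x y => r y x) a b ↔ (fun x y => r y x) (a + 2) (b + 2) :=
          fun a b => hS b a
        have hR' : ∀ a b : ℤ, (fun x y => r y x) a b ↔ (fun x y => r y x) (-b - 1) (-a - 1) :=
          fun a b => hR b a
        have hC' : ∃ a b : ℤ, a % 2 = b % 2 ∧ Consecutive (fun x y => r y x) a b := by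
          obtain ⟨a, b, h1, h2⟩ := hC
          exact ⟨a, b, h1, h2.1, fun c =>
            ⟨fun hu => (h2.2 c).2 ⟨hu.2, hu.1⟩, fun hu => (h2.2 c).1 ⟨hu.2, hu.1⟩⟩⟩
        rcases key (fun x y => r y x) hSTO' hS' hR' hC' h20 with h | h
        · refine Or.inr (Or.inr (Or.inr ?_))
          funext x y
          have hx : r x y = tauOE y x := congrFun (congrFun h y) x
          rw [hx]
          apply propext
          unfold tauOE tauEOm
          omega
        · refine Or.inr (Or.inl ?_)
          funext x y
          have hx : r x y = tauEO y x := congrFun (congrFun h y) x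
          rw [hx]
          apply propext
          unfold tauEO tauOEm
          omega
    · intro h
      rcases h with h | h | h | h <;> subst h
      · refine ⟨{ trichotomous := by intro a b; unfold tauOE; omega,
                  irrefl := by intro a; unfold tauOE; omega,
                  trans := by intro a b c; unfold tauOE; omega },
          fun a b => by unfold tauOE; omega,
          fun a b => by unfold tauOE; omega,
          1, 3, by norm_num, by norm_num, fun c => by unfold tauOE; omega⟩
      · refine ⟨{ trichotomous := by intro a b; unfold tauOEm; omega,
                  irrefl := by intro a; unfold tauOEm; omega,
                  trans := by intro a b c; unfold tauOEm; omega },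
          fun a b => by unfold tauOEm; omega,
          fun a b => by unfold tauOEm; omega,
          1, 3, by norm_num, by norm_num, fun c => by unfold tauOEm; omega⟩
      · refine ⟨{ trichotomous := by intro a b; unfold tauEO; omega,
                  irrefl := by intro a; unfold tauEO; omega,
                  trans := by intro a b c; unfold tauEO; omega },
          fun a b => by unfold tauEO; omega,
          fun a b => by unfold tauEO; omega,
          0, 2, by norm_num, by norm_num, fun c => by unfold tauEO; omega⟩
      · refine ⟨{ trichotomous := by intro a b; unfold tauEOm; omega,
                  irrefl := by intro a; unfold tauEOm; omega,
                  trans := by intro a b c; unfold tauEOm; omega },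
          fun a b => by unfold tauEOm; omega,
          fun a b => by unfold tauEOm; omega,
          0, 2, by norm_num, by norm_num, fun c => by unfold tauEOm; omega⟩
  · have h1 : tauOE 1 3 := by unfold tauOE; omega
    have h2 : ¬ tauOEm 1 3 := by unfold tauOEm; omega
    have h3 : ¬ tauEO 1 0 := by unfold tauEO; omega
    have h4 : tauOE 1 0 := by unfold tauOE; omega
    have h5 : ¬ tauEOm 1 0 := by unfold tauEOm; omega
    have h6 : tauOEm 1 0 := by unfold tauOEm; omega
    have h7 : tauEO 0 2 := by unfold tauEO; omega
    have h8 : ¬ tauEOm 0 2 := by unfold tauEOm; omega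
    refine List.Pairwise.cons ?_ (List.Pairwise.cons ?_ (List.Pairwise.cons ?_ (List.Pairwise.cons ?_ List.Pairwise.nil)))
    · intro t ht
      fin_cases ht
      · exact fun h => h2 (h ▸ h1)
      · exact fun h => h3 (h ▸ h4)
      · exact fun h => h5 (h ▸ h4)
    · intro t ht
      fin_cases ht
      · exact fun h => h3 (h ▸ h6)
      · exact fun h => h5 (h ▸ h6)
    · intro t ht
      fin_cases ht
      · exact fun h => h8 (h ▸ h7)
    · intro t ht
      simp at ht
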